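/- Let S be a nonempty finite set of states, A a metric space of actions, P : S × A × S → ℝ with P(s'|s,a) ≥ 0 and ∑_{s'∈S} P(s'|s,a) = 1 for all (s,a), R : S × A → ℝ, γ ∈ [0,1), λ ∈ [0,1], and for each s let β̂(s) ⊆ β̃(s) ⊆ A be nonempty finite subsets satisfying the ε_a-closeness condition: for every s and every a₁ ∈ β̃(s) there exists a₂ ∈ β̂(s) with dist(a₁,a₂) ≤ ε_a. Define (T_In Q)(s,a) = R(s,a) + γ ∑_{s'} P(s'|s,a)·max_{a'∈β̂(s')} Q(s',a') and (T_DMG Q)(s,a) = R(s,a) + γ ∑_{s'} P(s'|s,a)·[λ·max_{a'∈β̃(s')} Q(s',a') + (1−λ)·max_{a'∈β̂(s')} Q(s',a')]. Then for every f : S × A → ℝ that is K_Q-Lipschitz in the action (|f(s,a₁) − f(s,a₂)| ≤ K_Q·dist(a₁,a₂) for all s, a₁, a₂, K_Q ≥ 0), and for every s ∈ S and a ∈ β̂(s): (T_In f)(s,a) ≤ (T_DMG f)(s,a) ≤ (T_In f)(s,a) + γ·λ·ε_a·K_Q. -/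
import Mathlib


/-- One-step sandwich bound under worst-case generalization: for `f` Lipschitz in the action
and any in-sample pair `(s,a)`, `(T_In f)(s,a) ≤ (T_DMG f)(s,a) ≤ (T_In f)(s,a) + γ·λ·ε_a·K_Q`. -/
theorem dmg_one_step_sandwich
    {S A : Type*} [Fintype S] [Nonempty S] [MetricSpace A]
    (P : S → A → S → ℝ) (R : S → A → ℝ) (γ lam : ℝ)
    (hγ0 : 0 ≤ γ) (hγ1 : γ < 1) (hlam0 : 0 ≤ lam) (hlam1 : lam ≤ 1)
    (hPpos : ∀ s a s', 0 ≤ P s a s') (hPsum : ∀ s a, ∑ s' : S, P s a s' = 1)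
    (βhat βtil : S → Finset A)
    (hβhat : ∀ s, (βhat s).Nonempty) (hβtil : ∀ s, (βtil s).Nonempty)
    (hsub : ∀ s, βhat s ⊆ βtil s)
    (εa : ℝ)
    (hclose : ∀ s, ∀ a₁ ∈ βtil s, ∃ a₂ ∈ βhat s, dist a₁ a₂ ≤ εa)
    (TIn TDMG : (S → A → ℝ) → S → A → ℝ)
    (hTIn : ∀ Q s a, TIn Q s a =
      R s a + γ * ∑ s' : S, P s a s' * (βhat s').sup' (hβhat s') (fun a' => Q s' a'))
    (hTDMG : ∀ Q s a, TDMG Q s a =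
      R s a + γ * ∑ s' : S, P s a s' *
        (lam * (βtil s').sup' (hβtil s') (fun a' => Q s' a') +
          (1 - lam) * (βhat s').sup' (hβhat s') (fun a' => Q s' a'))) :
    ∀ (f : S → A → ℝ) (K_Q : ℝ), 0 ≤ K_Q →
      (∀ s a₁ a₂, |f s a₁ - f s a₂| ≤ K_Q * dist a₁ a₂) →
      ∀ s, ∀ a ∈ βhat s,
        TIn f s a ≤ TDMG f s a ∧ TDMG f s a ≤ TIn f s a + γ * lam * εa * K_Q := by
  intro f K_Q hK hLip s a _ha
  -- abbreviations
  set Mh : S → ℝ := fun s' => (βhat s').sup' (hβhat s') (fun a' => f s' a') with hMh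
  set Mt : S → ℝ := fun s' => (βtil s').sup' (hβtil s') (fun a' => f s' a') with hMt
  have hle : ∀ s', Mh s' ≤ Mt s' := by
    intro s'
    exact Finset.sup'_le _ _ fun b hb => Finset.le_sup' _ (hsub s' hb)
  have hεa : 0 ≤ εa := by
    obtain ⟨a₁, ha₁⟩ := hβtil s
    obtain ⟨a₂, -, h⟩ := hclose s a₁ ha₁
    exact le_trans dist_nonneg h
  have hub : ∀ s', Mt s' ≤ Mh s' + K_Q * εa := by
    intro s'
    apply Finset.sup'_le
    intro a₁ ha₁
    obtain ⟨a₂, ha₂, hd⟩ := hclose s' a₁ ha₁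
    have h1 : f s' a₁ - f s' a₂ ≤ K_Q * dist a₁ a₂ :=
      le_trans (le_abs_self _) (hLip s' a₁ a₂)
    have h2 : K_Q * dist a₁ a₂ ≤ K_Q * εa := mul_le_mul_of_nonneg_left hd hK
    have h3 : f s' a₂ ≤ Mh s' := Finset.le_sup' _ ha₂
    linarith
  have key : ∀ s', lam * Mt s' + (1 - lam) * Mh s' = Mh s' + lam * (Mt s' - Mh s') := by
    intro s'; ring
  rw [hTIn, hTDMG]
  constructor
  · have : ∀ s' : S, P s a s' * Mh s' ≤
        P s a s' * (lam * Mt s' + (1 - lam) * Mh s') := by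
      intro s'
      apply mul_le_mul_of_nonneg_left _ (hPpos s a s')
      rw [key]
      nlinarith [hle s']
    have := Finset.sum_le_sum (fun s' (_ : s' ∈ Finset.univ) => this s')
    nlinarith [this]
  · have hterm : ∀ s' : S, P s a s' * (lam * Mt s' + (1 - lam) * Mh s') ≤
        P s a s' * Mh s' + P s a s' * (lam * (εa * K_Q)) := by
      intro s'
      rw [key, mul_add, add_le_add_iff_left]
      apply mul_le_mul_of_nonneg_left _ (hPpos s a s')
      have := hub s'
      nlinarith [hle s']
    have hsum := Finset.sum_le_sum (fun s' (_ : s' ∈ Finset.univ) => hterm s')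
    rw [Finset.sum_add_distrib, ← Finset.sum_mul] at hsum
    rw [hPsum s a, one_mul] at hsum
    nlinarith [hsum]
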